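/- Uniformly for real k > 0 and large x, ∫₂^x (t/log t)^k dt = x^{k+1}/((k+1)(log x)^k) · (1 + O(1/log x)), with an absolute implied constant (uniform in k). -/

import Mathlib

open Real Set intervalIntegral MeasureTheory

noncomputable def stmtFk (k t : ℝ) : ℝ := t ^ (k+1) * Real.log t ^ (-k) / (k+1)

noncomputable def stmtFk' (k t : ℝ) : ℝ :=
  ((k+1) * t ^ k * Real.log t ^ (-k) + t ^ (k+1) * (t⁻¹ * -k * Real.log t ^ (-k-1))) / (k+1)

noncomputable def stmtGk (k t : ℝ) : ℝ := (t / Real.log t) ^ k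

lemma stmt_log_pos {t : ℝ} (ht : 2 ≤ t) : 0 < Real.log t :=
  Real.log_pos (by linarith)

lemma stmtFk_deriv (k : ℝ) {t : ℝ} (ht : 2 ≤ t) : HasDerivAt (stmtFk k) (stmtFk' k t) t := by
  have ht0 : (0:ℝ) < t := by linarith
  have hlt : 0 < Real.log t := stmt_log_pos ht
  have h1 : HasDerivAt (fun s : ℝ => s ^ (k+1)) ((k+1) * t ^ k) t := by
    have := Real.hasDerivAt_rpow_const (x := t) (p := k+1) (Or.inl ht0.ne')
    simpa using this
  have h2 : HasDerivAt (fun s : ℝ => Real.log s ^ (-k)) (t⁻¹ * -k * Real.log t ^ (-k-1)) t := by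
    have hlog := Real.hasDerivAt_log ht0.ne'
    have := hlog.rpow_const (p := -k) (Or.inl hlt.ne')
    simpa [sub_eq_add_neg] using this
  exact (h1.mul h2).div_const (k+1)

lemma stmtGk_eq (k : ℝ) {t : ℝ} (ht : 2 ≤ t) :
    stmtGk k t = t ^ k * Real.log t ^ (-k) := by
  have ht0 : (0:ℝ) < t := by linarith
  have hlt : 0 < Real.log t := stmt_log_pos ht
  rw [stmtGk, Real.div_rpow ht0.le hlt.le, Real.rpow_neg hlt.le, div_eq_mul_inv]

lemma stmt_key (k : ℝ) (hk : 0 < k) {t : ℝ} (ht : 2 ≤ t) :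
    stmtGk k t - stmtFk' k t = k/(k+1) * (stmtGk k t / Real.log t) := by
  have ht0 : (0:ℝ) < t := by linarith
  have hlt : 0 < Real.log t := stmt_log_pos ht
  have hk1 : (0:ℝ) < k + 1 := by linarith
  have htk1 : t ^ (k+1) = t ^ k * t := Real.rpow_add_one ht0.ne' k
  have hu : Real.log t ^ (-k-1) = Real.log t ^ (-k) * (Real.log t)⁻¹ := by
    rw [show -k-1 = -k + (-1) by ring, Real.rpow_add hlt, Real.rpow_neg_one]
  rw [stmtGk_eq k ht, stmtFk', htk1, hu]
  field_simp
  ring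

lemma stmt_log_contOn {a b : ℝ} (ha : 2 ≤ a) : ContinuousOn Real.log (Icc a b) :=
  Real.continuousOn_log.mono (fun t ht => by
    simp only [Set.mem_compl_iff, Set.mem_singleton_iff]
    have := ht.1; intro h; rw [h] at this; linarith)

lemma stmtGk_contOn {x : ℝ} {k : ℝ} (hk : 0 ≤ k) : ContinuousOn (stmtGk k) (Icc 2 x) := by
  apply ContinuousOn.rpow_const
  · exact continuousOn_id.div (stmt_log_contOn le_rfl)
      (fun t ht => (stmt_log_pos ht.1).ne')
  · exact fun t ht => Or.inr hk

lemma stmtFk'_contOn {x : ℝ} {k : ℝ} (hk : 0 ≤ k) : ContinuousOn (stmtFk' k) (Icc 2 x) := by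
  have hne : ∀ t ∈ Icc (2:ℝ) x, t ≠ 0 := fun t ht => by
    have := ht.1; intro h; rw [h] at this; linarith
  have hlne : ∀ t ∈ Icc (2:ℝ) x, Real.log t ≠ 0 := fun t ht => (stmt_log_pos ht.1).ne'
  have htk : ContinuousOn (fun t : ℝ => t ^ k) (Icc 2 x) :=
    continuousOn_id.rpow_const (fun t ht => Or.inr hk)
  have htk1 : ContinuousOn (fun t : ℝ => t ^ (k+1)) (Icc 2 x) :=
    continuousOn_id.rpow_const (fun t ht => Or.inr (by linarith))
  have hlk : ContinuousOn (fun t : ℝ => Real.log t ^ (-k)) (Icc 2 x) :=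
    (stmt_log_contOn le_rfl).rpow_const (fun t ht => Or.inl (hlne t ht))
  have hlk1 : ContinuousOn (fun t : ℝ => Real.log t ^ (-k-1)) (Icc 2 x) :=
    (stmt_log_contOn le_rfl).rpow_const (fun t ht => Or.inl (hlne t ht))
  have hinv : ContinuousOn (fun t : ℝ => t⁻¹) (Icc 2 x) := continuousOn_id.inv₀ hne
  exact (((continuousOn_const.mul htk).mul hlk).add
    (htk1.mul ((hinv.mul continuousOn_const).mul hlk1))).div_const _

lemma stmt_alg {L I M : ℝ} (hL : 64 ≤ L) (hM : 0 < M)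
    (hup : (L-2)*I ≤ (L+2)*M) (hlo : (L-1)*M ≤ L*I) :
    |I/M - 1| ≤ 8/L ∧ I = M*(1+(I/M-1)) := by
  have hL0 : (0:ℝ) < L := by linarith
  have hIM : I = M * (1 + (I/M - 1)) := by field_simp; ring
  refine ⟨?_, hIM⟩
  rw [abs_le]
  constructor
  · have h1 : (L-1)/L ≤ I/M := by
      rw [div_le_div_iff₀ hL0 hM]; nlinarith [hlo]
    have h2 : 1 - 8/L ≤ (L-1)/L := by
      rw [sub_div, div_self hL0.ne']
      have h3 : 1/L ≤ 8/L := by gcongr <;> norm_num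
      linarith
    linarith
  · have h1 : I/M ≤ (L+2)/(L-2) := by
      rw [div_le_div_iff₀ hM (by linarith : (0:ℝ) < L - 2)]; nlinarith [hup]
    have h2 : (L+2)/(L-2) ≤ 1 + 8/L := by
      rw [div_le_iff₀ (by linarith : (0:ℝ) < L - 2)]
      have haL : 8/L*L = 8 := div_mul_cancel₀ 8 hL0.ne'
      have ha0 : (0:ℝ) ≤ 8/L := by positivity
      nlinarith [haL, ha0, hL]
    linarith

set_option maxHeartbeats 1000000 in
theorem stmt_19 : ∃ C : ℝ, 0 < C ∧ ∃ x₀ : ℝ, ∀ x : ℝ, x₀ ≤ x → ∀ k : ℝ, 0 < k →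
    ∃ E : ℝ, |E| ≤ C / Real.log x ∧
      ∫ t in (2 : ℝ)..x, (t / Real.log t) ^ k =
        x ^ (k + 1) / ((k + 1) * (Real.log x) ^ k) * (1 + E) := by
  refine ⟨8, by norm_num, Real.exp 64, fun x hx k hk => ?_⟩
  have hx0 : (0:ℝ) < x := lt_of_lt_of_le (Real.exp_pos 64) hx
  set L := Real.log x with hLdef
  have hk1 : (0:ℝ) < k + 1 := by linarith
  have hL : 64 ≤ L := by
    have h := Real.log_le_log (Real.exp_pos 64) hx
    rwa [Real.log_exp] at h
  have hL0 : (0:ℝ) < L := by linarith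
  -- x ≥ 16 L²
  have hx16 : 16 * L^2 ≤ x := by
    have hq : L/4 + 1 ≤ Real.exp (L/4) := Real.add_one_le_exp _
    have hsplit : Real.exp L
        = Real.exp (L/4) * Real.exp (L/4) * Real.exp (L/4) * Real.exp (L/4) := by
      rw [← Real.exp_add, ← Real.exp_add, ← Real.exp_add]; ring_nf
    have hxeL : x = Real.exp L := (Real.exp_log hx0).symm
    have ha : L/4 ≤ Real.exp (L/4) := by linarith
    have ha0 : (0:ℝ) < Real.exp (L/4) := Real.exp_pos _
    have h2 : L^2/16 ≤ Real.exp (L/4) * Real.exp (L/4) := by nlinarith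
    have h4 : L^2/16 * (L^2/16)
        ≤ (Real.exp (L/4) * Real.exp (L/4)) * (Real.exp (L/4) * Real.exp (L/4)) := by
      nlinarith
    have hL2 : 4096 ≤ L^2 := by nlinarith
    rw [hxeL, hsplit]; nlinarith
  set y := x / L^2 with hydef
  have hy16 : 16 ≤ y := by
    rw [hydef, le_div_iff₀ (by positivity)]; nlinarith
  have h2y : (2:ℝ) ≤ y := by linarith
  have hyx : y ≤ x := by
    rw [hydef]; apply div_le_self hx0.le; nlinarith
  have h2x : (2:ℝ) ≤ x := le_trans h2y hyx
  have hy0 : (0:ℝ) < y := by linarith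
  have hlog2 : 1/2 ≤ Real.log 2 := by
    have := Real.log_two_gt_d9; linarith
  have hlogy : L/2 ≤ Real.log y := by
    rw [hydef, Real.log_div hx0.ne' (by positivity), Real.log_pow]
    have hlogL : Real.log L ≤ L/4 := by
      have h1 : Real.log L = 2 * Real.log (Real.sqrt L) := by
        rw [Real.log_sqrt hL0.le]; ring
      have h2 : Real.log (Real.sqrt L) ≤ Real.sqrt L - 1 :=
        Real.log_le_sub_one_of_pos (Real.sqrt_pos.mpr hL0)
      have h3 : Real.sqrt L * Real.sqrt L = L := Real.mul_self_sqrt hL0.le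
      have h4 : 8 ≤ Real.sqrt L := by
        have : Real.sqrt 64 ≤ Real.sqrt L := Real.sqrt_le_sqrt hL
        rwa [show (64:ℝ) = 8^2 by norm_num, Real.sqrt_sq (by norm_num : (0:ℝ) ≤ 8)] at this
      nlinarith
    push_cast
    linarith
  -- (k+1) ≤ L^(k+1)
  have hkL : k + 1 ≤ L ^ (k+1) := by
    have h1 : Real.exp 1 ≤ L := by
      have := Real.exp_one_lt_d9; linarith
    have h2 : 1 ≤ Real.log L := by
      have := Real.log_le_log (Real.exp_pos 1) h1
      rwa [Real.log_exp] at this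
    have h3 : L ^ (k+1) = Real.exp (Real.log L * (k+1)) := Real.rpow_def_of_pos hL0 _
    have h4 : Real.exp (k+1) ≤ Real.exp (Real.log L * (k+1)) := by
      apply Real.exp_le_exp.mpr; nlinarith
    have h5 : (k+1) + 1 ≤ Real.exp (k+1) := Real.add_one_le_exp _
    linarith [h3 ▸ h4]
  have hlx0 : 0 < L ^ k := Real.rpow_pos_of_pos hL0 k
  have hxk1 : 0 < x ^ (k+1) := Real.rpow_pos_of_pos hx0 (k+1)
  have hM_pos : 0 < stmtFk k x := by
    rw [stmtFk]
    have : 0 < Real.log x ^ (-k) := Real.rpow_pos_of_pos (by rw [← hLdef]; exact hL0) _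
    positivity
  have hM_eq : stmtFk k x = x ^ (k+1) / ((k+1) * L ^ k) := by
    rw [stmtFk, ← hLdef, Real.rpow_neg hL0.le]
    field_simp
  -- F2 bound : L * F2 ≤ M
  have hF2_pos : 0 ≤ stmtFk k 2 := by
    rw [stmtFk]
    have h2' : 0 < Real.log 2 ^ (-k) := Real.rpow_pos_of_pos (by linarith) _
    positivity
  have hF2 : L * stmtFk k 2 ≤ stmtFk k x := by
    have hl2k : 0 < Real.log 2 ^ k := Real.rpow_pos_of_pos (by linarith) _
    have h2k : (0:ℝ) < (2:ℝ) ^ k := Real.rpow_pos_of_pos (by norm_num) _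
    have h2k1 : (0:ℝ) < (2:ℝ) ^ (k+1) := Real.rpow_pos_of_pos (by norm_num) _
    have key : L * (2 ^ (k+1) * L ^ k) * (2:ℝ) ^ k ≤ x ^ (k+1) := by
      have e1 : (2:ℝ) ^ (k+1) = 2 ^ k * 2 := Real.rpow_add_one (by norm_num) k
      have e2 : (2:ℝ) ^ k * 2 ^ k * L ^ k = (4*L) ^ k := by
        rw [show (4:ℝ)*L = 2*2*L by ring, Real.mul_rpow (by positivity) hL0.le,
          Real.mul_rpow (by norm_num) (by norm_num)]
      have e3 : ((4:ℝ)*L) ^ k ≤ x ^ k := Real.rpow_le_rpow (by positivity) (by nlinarith) hk.le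
      have e4 : x ^ (k+1) = x ^ k * x := Real.rpow_add_one hx0.ne' k
      have e5 : 2*L ≤ x := by nlinarith
      calc L * (2 ^ (k+1) * L ^ k) * (2:ℝ) ^ k = (2*L) * ((2:ℝ)^k * 2^k * L^k) := by
            rw [e1]; ring
        _ = (2*L) * (4*L)^k := by rw [e2]
        _ ≤ x * x ^ k := mul_le_mul e5 e3 (by positivity) hx0.le
        _ = x ^ (k+1) := by rw [e4]; ring
    have hinvlog : (Real.log 2 ^ k)⁻¹ ≤ 2 ^ k := by
      have hhalf : ((1:ℝ)/2) ^ k ≤ Real.log 2 ^ k :=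
        Real.rpow_le_rpow (by norm_num) hlog2 hk.le
      have hinv2 : ((1:ℝ)/2) ^ k = ((2:ℝ) ^ k)⁻¹ := by
        rw [show (1:ℝ)/2 = 2⁻¹ by norm_num, Real.inv_rpow (by norm_num)]
      rw [hinv2] at hhalf
      calc (Real.log 2 ^ k)⁻¹ ≤ (((2:ℝ)^k)⁻¹)⁻¹ := by
            apply inv_anti₀ (by positivity) hhalf
        _ = (2:ℝ)^k := inv_inv _
    have step1 : L * stmtFk k 2 = L * 2^(k+1) * (Real.log 2 ^ k)⁻¹ / (k+1) := by
      rw [stmtFk, Real.rpow_neg (by linarith : (0:ℝ) ≤ Real.log 2)]; ring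
    have step2 : L * 2^(k+1) * (Real.log 2 ^ k)⁻¹ / (k+1) ≤ L * 2^(k+1) * 2^k / (k+1) := by
      rw [div_le_div_iff₀ hk1 hk1]
      have := mul_le_mul_of_nonneg_left hinvlog (by positivity : (0:ℝ) ≤ L * 2^(k+1))
      nlinarith [this]
    have step3 : L * 2^(k+1) * 2^k / (k+1) ≤ x^(k+1) / ((k+1) * L^k) := by
      rw [div_le_div_iff₀ hk1 (by positivity : (0:ℝ) < (k+1) * L^k)]
      calc L * 2^(k+1) * 2^k * ((k+1) * L^k)
          = (L * (2^(k+1) * L^k) * 2^k) * (k+1) := by ring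
        _ ≤ x^(k+1) * (k+1) := mul_le_mul_of_nonneg_right key hk1.le
    rw [step1, hM_eq]
    exact le_trans step2 step3
  -- 2 y^(k+1) bound : L * (2 * y^(k+1)) ≤ 2 * M
  have hyk1 : 0 < y ^ (k+1) := Real.rpow_pos_of_pos hy0 _
  have hLk1 : 0 < L ^ (k+1) := Real.rpow_pos_of_pos hL0 _
  have hYM : L * (2 * y ^ (k+1)) ≤ 2 * stmtFk k x := by
    have e1 : y ^ (k+1) = x ^ (k+1) / (L^2) ^ (k+1) := by
      rw [hydef, Real.div_rpow hx0.le (by positivity)]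
    have e2 : ((L^2 : ℝ)) ^ (k+1) = L^(k+1) * L^(k+1) := by
      rw [sq, Real.mul_rpow hL0.le hL0.le]
    have e3 : L ^ (k+1) = L^k * L := Real.rpow_add_one hL0.ne' k
    rw [hM_eq, e1, e2, e3]
    rw [show L * (2 * (x ^ (k+1) / (L^k*L * (L^k*L)))) = 2*L*x^(k+1) / (L^k*L * (L^k*L)) by ring,
      show 2 * (x ^ (k+1) / ((k+1) * L^k)) = 2*x^(k+1) / ((k+1)*L^k) by ring,
      div_le_div_iff₀ (by positivity) (by positivity)]
    have hkL' : k + 1 ≤ L^k * L := e3 ▸ hkL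
    nlinarith [mul_le_mul_of_nonneg_left hkL' (by positivity : (0:ℝ) ≤ 2 * x^(k+1) * L * L^k)]
  -- integrability
  have huIcc2x : uIcc (2:ℝ) x = Icc 2 x := uIcc_of_le h2x
  have hg_cont : ContinuousOn (stmtGk k) (Icc 2 x) := stmtGk_contOn hk.le
  have hF'_cont : ContinuousOn (stmtFk' k) (Icc 2 x) := stmtFk'_contOn hk.le
  have hgmF'_cont : ContinuousOn (fun t => stmtGk k t - stmtFk' k t) (Icc 2 x) :=
    hg_cont.sub hF'_cont
  have hsub1 : Icc (2:ℝ) y ⊆ Icc 2 x := Icc_subset_Icc le_rfl hyx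
  have hsub2 : Icc y x ⊆ Icc (2:ℝ) x := Icc_subset_Icc h2y le_rfl
  have int_g : IntervalIntegrable (stmtGk k) volume 2 x :=
    (by rw [huIcc2x]; exact hg_cont : ContinuousOn _ (uIcc 2 x)).intervalIntegrable
  have int_F' : IntervalIntegrable (stmtFk' k) volume 2 x :=
    (by rw [huIcc2x]; exact hF'_cont : ContinuousOn _ (uIcc 2 x)).intervalIntegrable
  have int_g_2y : IntervalIntegrable (stmtGk k) volume 2 y :=
    (by rw [uIcc_of_le h2y]; exact hg_cont.mono hsub1 : ContinuousOn _ (uIcc 2 y)).intervalIntegrable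
  have int_g_yx : IntervalIntegrable (stmtGk k) volume y x :=
    (by rw [uIcc_of_le hyx]; exact hg_cont.mono hsub2 : ContinuousOn _ (uIcc y x)).intervalIntegrable
  have int_d_2y : IntervalIntegrable (fun t => stmtGk k t - stmtFk' k t) volume 2 y :=
    (by rw [uIcc_of_le h2y]; exact hgmF'_cont.mono hsub1 : ContinuousOn _ (uIcc 2 y)).intervalIntegrable
  have int_d_yx : IntervalIntegrable (fun t => stmtGk k t - stmtFk' k t) volume y x :=
    (by rw [uIcc_of_le hyx]; exact hgmF'_cont.mono hsub2 : ContinuousOn _ (uIcc y x)).intervalIntegrable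
  -- FTC
  have hFTC : ∫ t in (2:ℝ)..x, stmtFk' k t = stmtFk k x - stmtFk k 2 :=
    intervalIntegral.integral_eq_sub_of_hasDerivAt
      (fun t ht => stmtFk_deriv k (by rw [huIcc2x] at ht; exact ht.1)) int_F'
  set I := ∫ t in (2:ℝ)..x, stmtGk k t with hIdef
  set A := ∫ t in (2:ℝ)..y, (stmtGk k t - stmtFk' k t) with hAdef
  set B := ∫ t in y..x, (stmtGk k t - stmtFk' k t) with hBdef
  have hsum : A + B = I - (stmtFk k x - stmtFk k 2) := by
    have h1 := intervalIntegral.integral_add_adjacent_intervals int_d_2y int_d_yx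
    have h2 : ∫ t in (2:ℝ)..x, (stmtGk k t - stmtFk' k t)
        = I - (stmtFk k x - stmtFk k 2) := by
      rw [intervalIntegral.integral_sub int_g int_F', hFTC]
    rw [hAdef, hBdef, h1, h2]
  -- pointwise facts
  have hg_nonneg : ∀ t ∈ Icc (2:ℝ) x, 0 ≤ stmtGk k t := fun t ht =>
    Real.rpow_nonneg (div_nonneg (by linarith [ht.1]) (stmt_log_pos ht.1).le) k
  have hpt0 : ∀ t ∈ Icc (2:ℝ) x, 0 ≤ stmtGk k t - stmtFk' k t := by
    intro t ht
    rw [stmt_key k hk ht.1]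
    exact mul_nonneg (div_nonneg hk.le hk1.le)
      (div_nonneg (hg_nonneg t ht) (stmt_log_pos ht.1).le)
  have hkk1 : k/(k+1) ≤ 1 := by rw [div_le_one hk1]; linarith
  have hA0 : 0 ≤ A := intervalIntegral.integral_nonneg h2y (fun t ht => hpt0 t (hsub1 ht))
  have hB0 : 0 ≤ B := intervalIntegral.integral_nonneg hyx (fun t ht => hpt0 t (hsub2 ht))
  -- A upper bound
  have hA_ub : A ≤ 2 * y ^ (k+1) := by
    have hptA : ∀ t ∈ Icc (2:ℝ) y, stmtGk k t - stmtFk' k t ≤ 2 * y ^ k := by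
      intro t ht
      have ht2 : (2:ℝ) ≤ t := ht.1
      have hlt : 0 < Real.log t := stmt_log_pos ht2
      have hlt2 : Real.log 2 ≤ Real.log t := Real.log_le_log (by norm_num) ht2
      have hbase : t / Real.log t ≤ y := by
        rcases le_or_gt t 3 with h3 | h3
        · rw [div_le_iff₀ hlt]; nlinarith
        · have h1 : (1:ℝ) ≤ Real.log t := by
            have he : Real.exp 1 ≤ t := by
              have := Real.exp_one_lt_d9; linarith
            have h := Real.log_le_log (Real.exp_pos 1) he
            rwa [Real.log_exp] at h
          calc t / Real.log t ≤ t := div_le_self (by linarith) h1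
            _ ≤ y := ht.2
      have hgy : stmtGk k t ≤ y ^ k := by
        rw [stmtGk]
        exact Real.rpow_le_rpow (div_nonneg (by linarith) hlt.le) hbase hk.le
      have hg0 : 0 ≤ stmtGk k t := hg_nonneg t (hsub1 ht)
      have e := stmt_key k hk ht2
      have hgl : stmtGk k t / Real.log t ≤ 2 * stmtGk k t := by
        rw [div_le_iff₀ hlt]
        nlinarith [mul_nonneg hg0 (by linarith : (0:ℝ) ≤ 2*Real.log t - 1)]
      nlinarith [e, hgl, hgy, hkk1, hg0, div_nonneg hg0 hlt.le,
        mul_nonneg (sub_nonneg.mpr hkk1) (div_nonneg hg0 hlt.le)]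
    have h1 := intervalIntegral.integral_mono_on h2y int_d_2y
      intervalIntegrable_const hptA
    rw [intervalIntegral.integral_const, smul_eq_mul] at h1
    have hyk : 0 < y ^ k := Real.rpow_pos_of_pos hy0 k
    have e : y ^ (k+1) = y ^ k * y := Real.rpow_add_one hy0.ne' k
    nlinarith [h1]
  -- B upper bound : L * B ≤ 2 * I
  have hS0 : 0 ≤ ∫ t in y..x, stmtGk k t :=
    intervalIntegral.integral_nonneg hyx (fun t ht => hg_nonneg t (hsub2 ht))
  have hSI : (∫ t in y..x, stmtGk k t) ≤ I := by
    have h4 : 0 ≤ ∫ t in (2:ℝ)..y, stmtGk k t :=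
      intervalIntegral.integral_nonneg h2y (fun t ht => hg_nonneg t (hsub1 ht))
    have h5 := intervalIntegral.integral_add_adjacent_intervals int_g_2y int_g_yx
    rw [hIdef]
    linarith [h5]
  have hB_ub : L * B ≤ 2 * I := by
    have hptB : ∀ t ∈ Icc y x, stmtGk k t - stmtFk' k t ≤ 2/L * stmtGk k t := by
      intro t ht
      have ht2 : (2:ℝ) ≤ t := le_trans h2y ht.1
      have hlt : 0 < Real.log t := stmt_log_pos ht2
      have hlty : Real.log y ≤ Real.log t := Real.log_le_log hy0 ht.1
      have hLt : L/2 ≤ Real.log t := le_trans hlogy hlty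
      have hg0 : 0 ≤ stmtGk k t := hg_nonneg t (hsub2 ht)
      have e := stmt_key k hk ht2
      have hc : 2/L*L = 2 := div_mul_cancel₀ 2 hL0.ne'
      have hgl : stmtGk k t / Real.log t ≤ 2/L * stmtGk k t := by
        rw [div_le_iff₀ hlt]
        have h2L : (0:ℝ) ≤ 2/L := by positivity
        nlinarith [mul_nonneg (mul_nonneg h2L hg0) (by linarith : (0:ℝ) ≤ Real.log t - L/2)]
      nlinarith [e, hgl, hkk1, div_nonneg hg0 hlt.le,
        mul_nonneg (sub_nonneg.mpr hkk1) (div_nonneg hg0 hlt.le)]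
    have h1 : B ≤ ∫ t in y..x, 2/L * stmtGk k t :=
      intervalIntegral.integral_mono_on hyx int_d_yx (int_g_yx.const_mul _) hptB
    have h2 : (∫ t in y..x, 2/L * stmtGk k t) = 2/L * ∫ t in y..x, stmtGk k t :=
      intervalIntegral.integral_const_mul _ _
    have hc : 2/L*L = 2 := div_mul_cancel₀ 2 hL0.ne'
    rw [h2] at h1
    have h3 : L * B ≤ L * (2/L * ∫ t in y..x, stmtGk k t) :=
      mul_le_mul_of_nonneg_left h1 hL0.le
    have h4 : L * (2/L * ∫ t in y..x, stmtGk k t) = 2 * ∫ t in y..x, stmtGk k t := by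
      rw [← mul_assoc, mul_comm L (2/L), hc]
    rw [h4] at h3
    linarith
  -- assemble
  have hIeq : I = stmtFk k x - stmtFk k 2 + A + B := by linarith only [hsum]
  have hLI : L * I = L * stmtFk k x - L * stmtFk k 2 + L * A + L * B := by
    rw [hIeq]; ring
  have hupper : (L - 2) * I ≤ (L + 2) * stmtFk k x := by
    have hLA : L * A ≤ 2 * stmtFk k x := by
      have h := mul_le_mul_of_nonneg_left hA_ub hL0.le
      linarith only [h, hYM]
    have hLF2 : 0 ≤ L * stmtFk k 2 := mul_nonneg hL0.le hF2_pos
    have hexp : (L - 2) * I = L * I - 2 * I := by ring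
    have hexp2 : (L + 2) * stmtFk k x = L * stmtFk k x + 2 * stmtFk k x := by ring
    rw [hexp, hexp2]
    linarith only [hLI, hB_ub, hLA, hLF2]
  have hlower : (L - 1) * stmtFk k x ≤ L * I := by
    have h1 : 0 ≤ L * A := mul_nonneg hL0.le hA0
    have h2 : 0 ≤ L * B := mul_nonneg hL0.le hB0
    have hexp : (L - 1) * stmtFk k x = L * stmtFk k x - stmtFk k x := by ring
    rw [hexp]
    linarith only [hLI, hF2, h1, h2]
  have halg := stmt_alg hL hM_pos hupper hlower
  have hgoal : (∫ t in (2:ℝ)..x, (t / Real.log t) ^ k) = I := by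
    rw [hIdef]
    simp only [stmtGk]
  refine ⟨I / stmtFk k x - 1, halg.1, ?_⟩
  rw [hgoal, ← hM_eq]
  exact halg.2
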